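/- Let X be a topological space and N an open neighborhood assignment on X. Suppose R is a nearly good relation on X such that every non-empty closed subset F of X contains a non-empty closed discrete subset D which is N-sticky mod R on F. Then there is a closed discrete subset D* of X with ⋃{N(d) : d ∈ D*} = X. -/

import Mathlib

open Set TopologicalSpace

def NearlyGood {X : Type*} [TopologicalSpace X] (R : X → X → Prop) : Prop :=
  ∀ (A : Set X) (x : X), x ∈ closure A → ∃ y ∈ A, R x y

def IsSticky {X : Type*} [TopologicalSpace X] (N : X → Set X) (R : X → X → Prop)
    (D X' : Set X) : Prop :=
  ∀ x ∈ X', (∃ y ∈ D, R x y) → x ∈ ⋃ d ∈ D, N d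

noncomputable def stickyFam {X : Type*} [TopologicalSpace X]
    (pick : Set X → Set X) (N : X → Set X) (α : Ordinal) : Set X :=
  pick (Set.univ \ ⋃ β, ⋃ (_ : β < α), ⋃ d ∈ stickyFam pick N β, N d)
termination_by α
decreasing_by assumption

theorem stickyFam_eq {X : Type*} [TopologicalSpace X]
    (pick : Set X → Set X) (N : X → Set X) (α : Ordinal) :
    stickyFam pick N α
      = pick (Set.univ \ ⋃ β, ⋃ (_ : β < α), ⋃ d ∈ stickyFam pick N β, N d) := by
  rw [stickyFam]

theorem not_mem_closure_diff_of_closed_discrete {X : Type*} [TopologicalSpace X]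
    {D : Set X} (hc : IsClosed D) (hd : DiscreteTopology D) (x : X) :
    x ∉ closure (D \ {x}) := by
  have h := isClosed_and_discrete_iff.mp ⟨hc, isDiscrete_iff_discreteTopology.mpr hd⟩ x
  rw [mem_closure_iff_nhdsWithin_neBot]
  have : D \ {x} = {x}ᶜ ∩ D := by ext y; simp [Set.mem_diff, and_comm]
  rw [this, nhdsWithin_inter']
  exact fun hne => hne.ne (disjoint_iff.mp h)

theorem sticky_relation_principle {X : Type*} [TopologicalSpace X]
    (N : X → Set X) (hNopen : ∀ x, IsOpen (N x)) (hNmem : ∀ x, x ∈ N x)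
    (R : X → X → Prop) (hR : NearlyGood R)
    (hsticky : ∀ F : Set X, IsClosed F → F.Nonempty →
      ∃ D : Set X, D ⊆ F ∧ D.Nonempty ∧ IsClosed D ∧ DiscreteTopology D ∧
        IsSticky N R D F) :
    ∃ D : Set X, IsClosed D ∧ DiscreteTopology D ∧ (⋃ d ∈ D, N d) = Set.univ := by
  classical
  -- choice function
  set pick : Set X → Set X := fun F =>
    if h : IsClosed F ∧ F.Nonempty then (hsticky F h.1 h.2).choose else ∅ with hpickdef
  set D : Ordinal.{u_1} → Set X := stickyFam pick N with hD
  set F : Ordinal → Set X :=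
    fun α => Set.univ \ ⋃ β, ⋃ (_ : β < α), ⋃ d ∈ D β, N d with hF
  set U : Ordinal → Set X := fun α => ⋃ d ∈ D α, N d with hU
  have hDeq : ∀ α, D α = pick (F α) := fun α => stickyFam_eq pick N α
  have hUopen : ∀ α, IsOpen (⋃ β, ⋃ (_ : β < α), U β) :=
    fun α => isOpen_iUnion fun β => isOpen_iUnion fun _ =>
      isOpen_biUnion fun d _ => hNopen d
  have hFc : ∀ α, IsClosed (F α) := by
    intro α
    have : F α = (⋃ β, ⋃ (_ : β < α), U β)ᶜ := (Set.compl_eq_univ_diff _).symm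
    rw [this]
    exact (hUopen α).isClosed_compl
  -- properties of D α when F α is nonempty
  have hDprop : ∀ α, (F α).Nonempty →
      D α ⊆ F α ∧ (D α).Nonempty ∧ IsClosed (D α) ∧ DiscreteTopology (D α) ∧
        IsSticky N R (D α) (F α) := by
    intro α hne
    have heq : D α = (hsticky (F α) (hFc α) hne).choose := by
      rw [hDeq α, hpickdef]
      exact dif_pos ⟨hFc α, hne⟩
    rw [heq]
    exact (hsticky (F α) (hFc α) hne).choose_spec
  have hDempty : ∀ α, ¬(F α).Nonempty → D α = ∅ := by
    intro α hne
    rw [hDeq α, hpickdef]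
    exact dif_neg (fun h => hne h.2)
  have hDsub : ∀ α, D α ⊆ F α := by
    intro α
    by_cases hne : (F α).Nonempty
    · exact (hDprop α hne).1
    · rw [hDempty α hne]; exact Set.empty_subset _
  -- membership criterion for F
  have hUmem : ∀ (β : Ordinal) (x : X), x ∈ U β ↔ ∃ d ∈ D β, x ∈ N d := by
    intro β x
    rw [hU]
    simp only [Set.mem_iUnion, exists_prop]
  have hFmem : ∀ α x, x ∈ F α ↔ ∀ β < α, x ∉ U β := by
    intro α x
    rw [hF]
    simp only [Set.mem_diff, Set.mem_univ, true_and, Set.mem_iUnion, not_exists]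
    constructor
    · intro h β hβ hxU
      obtain ⟨d, hd, hN⟩ := (hUmem β x).mp hxU
      exact h β hβ d hd hN
    · intro h β hβ d hd hN
      exact h β hβ ((hUmem β x).mpr ⟨d, hd, hN⟩)
  -- F is antitone
  have hFanti : ∀ {α β : Ordinal}, α ≤ β → F β ⊆ F α := by
    intro α β hab x hx
    rw [hFmem] at hx ⊢
    exact fun γ hγ => hx γ (lt_of_lt_of_le hγ hab)
  -- some F α is empty
  have hterm : ∃ α, F α = ∅ := by
    by_contra h
    push_neg at h
    have hne : ∀ α, (F α).Nonempty := h
    set f : Ordinal → X := fun α => ((hDprop α (hne α)).2.1).choose with hf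
    have hfmem : ∀ α, f α ∈ D α := fun α => ((hDprop α (hne α)).2.1).choose_spec
    have hinj : Function.Injective f := by
      intro α β hab
      by_contra hne'
      rcases lt_or_gt_of_ne hne' with hlt | hlt
      · have h1 : f α ∈ U α := Set.mem_biUnion (hfmem α) (hNmem _)
        have h2 : f β ∈ F β := hDsub β (hfmem β)
        rw [hFmem] at h2
        exact h2 α hlt (hab ▸ h1)
      · have h1 : f β ∈ U β := Set.mem_biUnion (hfmem β) (hNmem _)
        have h2 : f α ∈ F α := hDsub α (hfmem α)
        rw [hFmem] at h2
        exact h2 β hlt (hab ▸ h1)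
    exact not_injective_of_ordinal f hinj
  obtain ⟨α₀, hα₀⟩ := hterm
  -- the candidate set
  set Dstar : Set X := ⋃ β, ⋃ (_ : β < α₀), D β with hDstar
  -- covering
  have hcover : (⋃ d ∈ Dstar, N d) = Set.univ := by
    apply Set.eq_univ_of_forall
    intro x
    have hx : x ∉ F α₀ := by rw [hα₀]; exact Set.notMem_empty x
    rw [hFmem] at hx
    push_neg at hx
    obtain ⟨β, hβ, hxU⟩ := hx
    rw [hU] at hxU
    simp only [Set.mem_iUnion] at hxU ⊢
    obtain ⟨d, hd, hxd⟩ := hxU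
    exact ⟨d, Set.mem_iUnion.mpr ⟨β, Set.mem_iUnion.mpr ⟨hβ, hd⟩⟩, hxd⟩
  -- the key non-accumulation property
  have hkey : ∀ x : X, x ∉ closure (Dstar \ {x}) := by
    intro x hxcl
    -- least stage where x is covered
    have hxcov : {β : Ordinal | x ∈ U β}.Nonempty := by
      have hx : x ∉ F α₀ := by rw [hα₀]; exact Set.notMem_empty x
      rw [hFmem] at hx
      push_neg at hx
      obtain ⟨β, _, hβ⟩ := hx
      exact ⟨β, hβ⟩
    set β := Ordinal.lt_wf.min _ hxcov with hβdef
    have hβmem : x ∈ U β := Ordinal.lt_wf.min_mem _ hxcov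
    have hβmin : ∀ γ < β, x ∉ U γ := fun γ hγ h => Ordinal.lt_wf.not_lt_min {β : Ordinal | x ∈ U β} h hγ
    have hxFβ : x ∈ F β := (hFmem β x).mpr hβmin
    -- decompose
    have hsubset : Dstar \ {x} ⊆
        ((⋃ γ, ⋃ (_ : γ < β), D γ) \ {x}) ∪ ((D β \ {x}) ∪ F (Order.succ β)) := by
      rintro y ⟨hy, hyx⟩
      simp only [hDstar, Set.mem_iUnion] at hy
      obtain ⟨γ, _, hyD⟩ := hy
      rcases lt_trichotomy γ β with h | h | h
      · exact Or.inl ⟨Set.mem_iUnion.mpr ⟨γ, Set.mem_iUnion.mpr ⟨h, hyD⟩⟩, hyx⟩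
      · exact Or.inr (Or.inl ⟨h ▸ hyD, hyx⟩)
      · exact Or.inr (Or.inr (hFanti (Order.succ_le_of_lt h) (hDsub γ hyD)))
    have hcl := closure_mono hsubset hxcl
    rw [closure_union, closure_union] at hcl
    rcases hcl with h1 | h2 | h3
    · -- nearly good + sticky at some γ < β: contradiction with minimality
      obtain ⟨y, hy, hRxy⟩ := hR _ x h1
      obtain ⟨hy', _⟩ := hy
      simp only [Set.mem_iUnion] at hy'
      obtain ⟨γ, hγβ, hyD⟩ := hy'
      have hxFγ : x ∈ F γ := hFanti hγβ.le hxFβ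
      have hsg := (hDprop γ ⟨x, hxFγ⟩).2.2.2.2
      have := hsg x hxFγ ⟨y, hyD, hRxy⟩
      exact hβmin γ hγβ this
    · -- D β is closed discrete
      have hne : (F β).Nonempty := ⟨x, hxFβ⟩
      exact not_mem_closure_diff_of_closed_discrete
        (hDprop β hne).2.2.1 (hDprop β hne).2.2.2.1 x h2
    · -- F (succ β) is closed and x ∉ F (succ β)
      have hx : x ∈ F (Order.succ β) := (hFc _).closure_subset h3
      rw [hFmem] at hx
      exact hx β (Order.lt_succ β) hβmem
  refine ⟨Dstar, ?_, ?_, hcover⟩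
  · -- closed
    rw [← closure_subset_iff_isClosed]
    intro x hx
    by_contra hxD
    have : Dstar \ {x} = Dstar := by
      ext y; simp only [Set.mem_diff, Set.mem_singleton_iff]
      exact ⟨fun h => h.1, fun h => ⟨h, fun he => hxD (he ▸ h)⟩⟩
    rw [← this] at hx
    exact hkey x hx
  · -- discrete
    rw [discreteTopology_subtype_iff]
    intro x hx
    have := hkey x
    rw [mem_closure_iff_nhdsWithin_neBot, Filter.not_neBot] at this
    rw [← nhdsWithin_inter']
    have heq : {x}ᶜ ∩ Dstar = Dstar \ {x} := by
      ext y; simp [Set.mem_diff, and_comm]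
    rw [heq]
    exact this
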